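/- Let S ∈ I₁ ∩ I₂, and let the shortest s–t path in G(S) have length 2(ℓ+1). Let Π = (B₁,A₁,…,A_ℓ,B_{ℓ+1}) be an augmenting set satisfying: B_{k} is in the span of S in M₁ for k ≥ 2, and there is no edge in G(S) from any a ∈ A_i to any b ∈ B_j when j > i+1. Then S − (A₁∪⋯∪A_ℓ) + (B₂∪⋯∪B_{ℓ+1}) ∈ I₁. -/

import Mathlib

open Classical

noncomputable section

structure FinMatroid (α : Type*) where
  Indep : Finset α → Prop
  empty_indep : Indep ∅
  subset_indep : ∀ ⦃A B : Finset α⦄, Indep A → B ⊆ A → Indep B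
  exchange : ∀ ⦃A B : Finset α⦄, Indep A → Indep B → A.card < B.card →
    ∃ b ∈ B \ A, Indep (insert b A)

variable {α : Type*} [DecidableEq α]

/-- The rank of a set `T`: the maximum cardinality of an independent subset of `T`. -/
def FinMatroid.rank (M : FinMatroid α) (T : Finset α) : ℕ :=
  (T.powerset.filter fun A => M.Indep A).sup Finset.card

/-- Vertices of the exchange graph: a source `src`, a sink `snk`, and the ground elements. -/
inductive EGV (α : Type*) where
  | src : EGV α
  | snk : EGV α
  | el : α → EGV α

/-- Arcs of the exchange graph `G(S)` for `S ∈ I₁ ∩ I₂`. -/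
def egAdj (M₁ M₂ : FinMatroid α) (S : Finset α) : EGV α → EGV α → Prop
  | EGV.src, EGV.el b => b ∉ S ∧ M₁.Indep (insert b S)
  | EGV.el b, EGV.snk => b ∉ S ∧ M₂.Indep (insert b S)
  | EGV.el x, EGV.el y =>
      (x ∈ S ∧ y ∉ S ∧ M₁.Indep (insert y (S.erase x))) ∨
      (x ∉ S ∧ y ∈ S ∧ M₂.Indep (insert x (S.erase y)))
  | _, _ => False

/-- Directed shortest-path distance in the exchange graph (number of arcs), `⊤` if unreachable. -/
def egDist (M₁ M₂ : FinMatroid α) (S : Finset α) (u v : EGV α) : ℕ∞ :=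
  sInf {n : ℕ∞ | ∃ l : List (EGV α),
    List.Chain' (egAdj M₁ M₂ S) (u :: (l ++ [v])) ∧ n = (l.length : ℕ∞) + 1}

/-- An augmenting set `(B 1, A 1, B 2, …, A ℓ, B (ℓ+1))` of width `w` in the exchange graph
`G(S)`: pairwise disjoint sets with `A k ⊆ D_{2k}`, `B k ⊆ D_{2k-1}` (distance layers from the
source), all of cardinality `w`, with `S + B₁ ∈ I₁`, `S + B_{ℓ+1} ∈ I₂`,
`S − A_k + B_{k+1} ∈ I₁` and `S − A_k + B_k ∈ I₂`. -/
def IsAugSet (M₁ M₂ : FinMatroid α) (S : Finset α) (ℓ w : ℕ)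
    (A B : ℕ → Finset α) : Prop :=
  (∀ k ∈ Finset.Icc 1 ℓ, ∀ a ∈ A k,
      egDist M₁ M₂ S EGV.src (EGV.el a) = ((2 * k : ℕ) : ℕ∞)) ∧
  (∀ k ∈ Finset.Icc 1 (ℓ + 1), ∀ b ∈ B k,
      egDist M₁ M₂ S EGV.src (EGV.el b) = ((2 * k - 1 : ℕ) : ℕ∞)) ∧
  (∀ i ∈ Finset.Icc 1 ℓ, ∀ j ∈ Finset.Icc 1 ℓ, i ≠ j → Disjoint (A i) (A j)) ∧
  (∀ i ∈ Finset.Icc 1 (ℓ + 1), ∀ j ∈ Finset.Icc 1 (ℓ + 1), i ≠ j → Disjoint (B i) (B j)) ∧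
  (∀ i ∈ Finset.Icc 1 ℓ, ∀ j ∈ Finset.Icc 1 (ℓ + 1), Disjoint (A i) (B j)) ∧
  (∀ k ∈ Finset.Icc 1 ℓ, (A k).card = w) ∧
  (∀ k ∈ Finset.Icc 1 (ℓ + 1), (B k).card = w) ∧
  M₁.Indep (S ∪ B 1) ∧
  M₂.Indep (S ∪ B (ℓ + 1)) ∧
  (∀ k ∈ Finset.Icc 1 ℓ, M₁.Indep ((S \ A k) ∪ B (k + 1))) ∧
  (∀ k ∈ Finset.Icc 1 ℓ, M₂.Indep ((S \ A k) ∪ B k))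

namespace FinMatroid

lemma exchange' (M : FinMatroid α) ⦃A B : Finset α⦄ (hA : M.Indep A) (hB : M.Indep B)
    (h : A.card < B.card) : ∃ b ∈ B \ A, M.Indep (insert b A) := by
  obtain ⟨b, hb, hbi⟩ := M.exchange hA hB h
  have hI : (fun (a b : α) => Classical.propDecidable (a = b)) = ‹DecidableEq α› :=
    Subsingleton.elim _ _
  rw [hI] at hb hbi
  exact ⟨b, hb, hbi⟩

lemma card_le_rank (M : FinMatroid α) {Z T : Finset α} (hZ : M.Indep Z) (hZT : Z ⊆ T) :
    Z.card ≤ M.rank T :=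
  Finset.le_sup (Finset.mem_filter.2 ⟨Finset.mem_powerset.2 hZT, hZ⟩)

lemma exists_rank_witness (M : FinMatroid α) (T : Finset α) :
    ∃ Z, Z ⊆ T ∧ M.Indep Z ∧ Z.card = M.rank T := by
  have hne : (T.powerset.filter fun A => M.Indep A).Nonempty :=
    ⟨∅, Finset.mem_filter.2 ⟨Finset.mem_powerset.2 (Finset.empty_subset T), M.empty_indep⟩⟩
  obtain ⟨Z, hZ, hsup⟩ := Finset.exists_mem_eq_sup _ hne Finset.card
  rw [Finset.mem_filter, Finset.mem_powerset] at hZ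
  exact ⟨Z, hZ.1, hZ.2, hsup.symm⟩

lemma rank_le_card (M : FinMatroid α) (T : Finset α) : M.rank T ≤ T.card := by
  apply Finset.sup_le
  intro Z hZ
  rw [Finset.mem_filter, Finset.mem_powerset] at hZ
  exact Finset.card_le_card hZ.1

lemma rank_mono (M : FinMatroid α) {T T' : Finset α} (h : T ⊆ T') : M.rank T ≤ M.rank T' := by
  obtain ⟨Z, h1, h2, h3⟩ := M.exists_rank_witness T
  exact h3 ▸ M.card_le_rank h2 (h1.trans h)

lemma indep_of_card_le_rank (M : FinMatroid α) {T : Finset α} (h : T.card ≤ M.rank T) :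
    M.Indep T := by
  obtain ⟨Z, h1, h2, h3⟩ := M.exists_rank_witness T
  have : Z = T := Finset.eq_of_subset_of_card_le h1 (by omega)
  exact this ▸ h2

lemma rank_of_indep (M : FinMatroid α) {T : Finset α} (h : M.Indep T) : M.rank T = T.card :=
  le_antisymm (M.rank_le_card T) (M.card_le_rank h Finset.Subset.rfl)

lemma exists_extend (M : FinMatroid α) (Z T : Finset α) (hZi : M.Indep Z) (hZT : Z ⊆ T) :
    ∃ Z', Z ⊆ Z' ∧ Z' ⊆ T ∧ M.Indep Z' ∧ Z'.card = M.rank T := by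
  suffices h : ∀ n (Z : Finset α), M.Indep Z → Z ⊆ T → M.rank T - Z.card ≤ n →
      ∃ Z', Z ⊆ Z' ∧ Z' ⊆ T ∧ M.Indep Z' ∧ Z'.card = M.rank T from
    h _ Z hZi hZT le_rfl
  intro n
  induction n with
  | zero =>
    intro Z hZi hZT hle
    have h1 := M.card_le_rank hZi hZT
    exact ⟨Z, Finset.Subset.rfl, hZT, hZi, by omega⟩
  | succ n ih =>
    intro Z hZi hZT hle
    by_cases hc : M.rank T ≤ Z.card
    · exact ⟨Z, Finset.Subset.rfl, hZT, hZi, le_antisymm (M.card_le_rank hZi hZT) hc⟩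
    · push_neg at hc
      obtain ⟨Y, hY1, hY2, hY3⟩ := M.exists_rank_witness T
      obtain ⟨b, hb, hbi⟩ := M.exchange' hZi hY2 (by omega)
      rw [Finset.mem_sdiff] at hb
      have hbZ : b ∉ Z := hb.2
      obtain ⟨Z', hZ'1, hZ'2, hZ'3, hZ'4⟩ := ih (insert b Z) hbi
        (Finset.insert_subset (hY1 hb.1) hZT)
        (by rw [Finset.card_insert_of_notMem hbZ]; omega)
      exact ⟨Z', (Finset.subset_insert _ _).trans hZ'1, hZ'2, hZ'3, hZ'4⟩

lemma rank_union_eq_of_forall (M : FinMatroid α) {X W : Finset α}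
    (h : ∀ b ∈ W, M.rank (insert b X) = M.rank X) :
    M.rank (X ∪ W) = M.rank X := by
  refine le_antisymm ?_ (M.rank_mono Finset.subset_union_left)
  obtain ⟨Z, hZX, hZi, hZc⟩ := M.exists_rank_witness X
  obtain ⟨Y, hY1, hY2, hY3⟩ := M.exists_rank_witness (X ∪ W)
  rw [← hY3, ← hZc]
  by_contra hlt
  push_neg at hlt
  obtain ⟨b, hb, hbi⟩ := M.exchange' hZi hY2 hlt
  rw [Finset.mem_sdiff] at hb
  rcases Finset.mem_union.1 (hY1 hb.1) with hbX | hbW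
  · have h2 := M.card_le_rank hbi (Finset.insert_subset hbX hZX)
    rw [Finset.card_insert_of_notMem hb.2] at h2
    omega
  · have h2 := M.card_le_rank hbi (Finset.insert_subset (Finset.mem_insert_self _ _)
      (hZX.trans (Finset.subset_insert _ _)))
    rw [Finset.card_insert_of_notMem hb.2, h b hbW] at h2
    omega

lemma rank_union_congr (M : FinMatroid α) {Z T : Finset α} (T' : Finset α)
    (hZi : M.Indep Z) (hZT : Z ⊆ T) (hZc : Z.card = M.rank T) :
    M.rank (T ∪ T') = M.rank (Z ∪ T') := by
  refine le_antisymm ?_ (M.rank_mono (Finset.union_subset_union_left hZT))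
  obtain ⟨Y, hYZ, hYsub, hYi, hYc⟩ := M.exists_extend Z (Z ∪ T') hZi Finset.subset_union_left
  obtain ⟨Y', hY'sub, hY'i, hY'c⟩ := M.exists_rank_witness (T ∪ T')
  rw [← hY'c, ← hYc]
  by_contra hlt
  push_neg at hlt
  obtain ⟨b, hb, hbi⟩ := M.exchange' hYi hY'i hlt
  rw [Finset.mem_sdiff] at hb
  have hbY : b ∉ Y := hb.2
  rcases Finset.mem_union.1 (hY'sub hb.1) with hbT | hbT'
  · have hbZ : b ∉ Z := fun hz => hbY (hYZ hz)
    have hind : M.Indep (insert b Z) := M.subset_indep hbi (Finset.insert_subset_insert _ hYZ)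
    have h2 := M.card_le_rank hind (Finset.insert_subset hbT hZT)
    rw [Finset.card_insert_of_notMem hbZ] at h2
    omega
  · have h2 := M.card_le_rank hbi
      (Finset.insert_subset (Finset.mem_union_right _ hbT') hYsub)
    rw [Finset.card_insert_of_notMem hbY] at h2
    omega

end FinMatroid

lemma egDist_exists (M₁ M₂ : FinMatroid α) (S : Finset α) {u v : EGV α} {m : ℕ}
    (h : egDist M₁ M₂ S u v = (m : ℕ∞)) :
    ∃ l : List (EGV α), List.Chain' (egAdj M₁ M₂ S) (u :: (l ++ [v])) ∧ l.length + 1 = m := by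
  unfold egDist at h
  set s : Set ℕ∞ := {n : ℕ∞ | ∃ l : List (EGV α),
    List.Chain' (egAdj M₁ M₂ S) (u :: (l ++ [v])) ∧ n = (l.length : ℕ∞) + 1} with hs
  have hmem : (m : ℕ∞) ∈ s := by
    by_contra hc
    have hge : ∀ x ∈ s, (m : ℕ∞) + 1 ≤ x := by
      intro x hx
      have h1 : (m : ℕ∞) ≤ x := h ▸ sInf_le hx
      have h2 : (m : ℕ∞) ≠ x := fun he => hc (he ▸ hx)
      exact (ENat.add_one_le_iff (by simp)).2 (h1.lt_of_ne h2)
    have h3 := le_sInf hge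
    rw [h] at h3
    exact absurd h3 (by exact_mod_cast Nat.not_succ_le_self m)
  obtain ⟨l, hl, he⟩ := hmem
  refine ⟨l, hl, ?_⟩
  have : ((l.length + 1 : ℕ) : ℕ∞) = (m : ℕ∞) := by push_cast; exact he.symm
  exact_mod_cast this

lemma no_edge_to_src (M₁ M₂ : FinMatroid α) (S : Finset α) (v : EGV α) :
    ¬ egAdj M₁ M₂ S v EGV.src := by
  cases v <;> simp [egAdj]

lemma chain_not_end_src (M₁ M₂ : FinMatroid α) (S : Finset α) (l : List (EGV α)) (x : EGV α) :
    ¬ List.Chain' (egAdj M₁ M₂ S) ((x :: l) ++ [EGV.src]) := by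
  intro h
  rw [List.Chain', List.isChain_append] at h
  obtain ⟨-, -, h3⟩ := h
  have hne : (x :: l) ≠ [] := by simp
  exact no_edge_to_src M₁ M₂ S _
    (h3 _ (by rw [List.getLast?_eq_getLast hne]; rfl) EGV.src rfl)

lemma chain_parity (M₁ M₂ : FinMatroid α) (S : Finset α) :
    ∀ (l : List (EGV α)) (a : α),
      List.Chain' (egAdj M₁ M₂ S) (EGV.src :: (l ++ [EGV.el a])) →
      (a ∈ S ↔ Odd l.length) := by
  intro l
  induction l using List.reverseRecOn with
  | nil =>
    intro a h
    simp only [List.nil_append] at h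
    have hadj : egAdj M₁ M₂ S EGV.src (EGV.el a) := (List.isChain_cons_cons.1 h).1
    simp only [egAdj] at hadj
    simp [hadj.1]
  | append_singleton l' u ih =>
    intro a h
    have h2 : List.Chain' (egAdj M₁ M₂ S) ((EGV.src :: (l' ++ [u])) ++ [EGV.el a]) := by
      simpa using h
    rw [List.Chain', List.isChain_append] at h2
    obtain ⟨h3, -, hedge⟩ := h2
    have hlq : (EGV.src :: (l' ++ [u])).getLast? = some u := by
      rw [show EGV.src :: (l' ++ [u]) = (EGV.src :: l') ++ [u] by simp]
      exact List.getLast?_concat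
    have hadj : egAdj M₁ M₂ S u (EGV.el a) := by
      apply hedge u _ (EGV.el a) rfl
      simp [hlq]
    cases u with
    | src =>
      exact absurd h3 (chain_not_end_src M₁ M₂ S l' EGV.src)
    | snk => exact absurd hadj (by simp [egAdj])
    | el y =>
      have hy : y ∈ S ↔ Odd l'.length := ih y (by simpa [List.Chain'] using h3)
      have hlen : (l' ++ [EGV.el y]).length = l'.length + 1 := by simp
      rw [hlen, Nat.odd_add_one, ← hy]
      simp only [egAdj] at hadj
      rcases hadj with ⟨hy1, ha1, -⟩ | ⟨hy1, ha1, -⟩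
      · simp [ha1, hy1]
      · simp [ha1, hy1]

/-- Key lemma towards Theorem (augmenting sets preserve independence): given an augmenting set
`Π = (B₁, A₁, …, A_ℓ, B_{ℓ+1})` in `G(S)` with shortest `s`–`t` distance `2(ℓ+1)`, such that
each `B_k` (`k ≥ 2`) lies in the span of `S` in `M₁` and there is no edge of `G(S)` from any
`a ∈ A_i` to any `b ∈ B_j` for `j > i + 1`, we have
`S − (A₁ ∪ ⋯ ∪ A_ℓ) + (B₂ ∪ ⋯ ∪ B_{ℓ+1}) ∈ I₁`. -/
theorem augset_minus_B1 (M₁ M₂ : FinMatroid α) (S : Finset α) (ℓ w : ℕ)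
    (A B : ℕ → Finset α)
    (hS₁ : M₁.Indep S) (hS₂ : M₂.Indep S)
    (hdist : egDist M₁ M₂ S EGV.src EGV.snk = ((2 * (ℓ + 1) : ℕ) : ℕ∞))
    (hAug : IsAugSet M₁ M₂ S ℓ w A B)
    (hspan : ∀ k ∈ Finset.Icc 2 (ℓ + 1), M₁.rank (S ∪ B k) = M₁.rank S)
    (hnoedge : ∀ i ∈ Finset.Icc 1 ℓ, ∀ j ∈ Finset.Icc 1 (ℓ + 1), i + 1 < j →
      ∀ a ∈ A i, ∀ b ∈ B j, ¬ M₁.Indep (insert b (S.erase a))) :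
    M₁.Indep ((S \ (Finset.Icc 1 ℓ).biUnion A) ∪ (Finset.Icc 2 (ℓ + 1)).biUnion B) := by
  obtain ⟨hdA, hdB, hAA, hBB, hAB, hcA, hcB, hB1, hBl, hI1, hI2⟩ := hAug
  set n := S.card with hn
  have hrankS : M₁.rank S = n := M₁.rank_of_indep hS₁
  have hAS : ∀ i ∈ Finset.Icc 1 ℓ, A i ⊆ S := by
    intro i hi a ha
    obtain ⟨l, hchain, hlen⟩ := egDist_exists M₁ M₂ S (hdA i hi a ha)
    have hi1 : 1 ≤ i := (Finset.mem_Icc.1 hi).1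
    rw [chain_parity M₁ M₂ S l a hchain, Nat.odd_iff]
    omega
  have hBS : ∀ j ∈ Finset.Icc 1 (ℓ + 1), ∀ b ∈ B j, b ∉ S := by
    intro j hj b hb
    obtain ⟨l, hchain, hlen⟩ := egDist_exists M₁ M₂ S (hdB j hj b hb)
    have hj1 : 1 ≤ j := (Finset.mem_Icc.1 hj).1
    rw [chain_parity M₁ M₂ S l b hchain, Nat.odd_iff]
    omega
  have main : ∀ d k, 1 ≤ k → k + d = ℓ + 1 →
      M₁.Indep ((S \ (Finset.Icc k ℓ).biUnion A) ∪ ((Finset.Icc (k+1) (ℓ+1)).biUnion B)) := by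
    intro d
    induction d with
    | zero =>
      intro k hk1 hk
      have hk2 : k = ℓ + 1 := by omega
      subst hk2
      rw [Finset.Icc_eq_empty (by omega), Finset.Icc_eq_empty (by omega)]
      simpa using hS₁
    | succ d ih =>
      intro k hk1 hk
      have hkl : k ≤ ℓ := by omega
      have hkIcc : k ∈ Finset.Icc 1 ℓ := Finset.mem_Icc.2 ⟨hk1, hkl⟩
      have IH := ih (k+1) (by omega) (by omega)
      set W2 : Finset α := (Finset.Icc (k+1+1) (ℓ+1)).biUnion B with hW2
      set X : Finset α := S \ A k with hX
      have hAkS : A k ⊆ S := hAS k hkIcc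
      have hAkc : (A k).card = w := hcA k hkIcc
      have hwn : w ≤ n := hAkc ▸ Finset.card_le_card hAkS
      have hXc : X.card = n - w := by rw [hX, Finset.card_sdiff_of_subset hAkS, hAkc]
      have hXi : M₁.Indep X := M₁.subset_indep hS₁ Finset.sdiff_subset
      have hrX : M₁.rank X = n - w := by rw [M₁.rank_of_indep hXi, hXc]
      have hW2S : ∀ b ∈ W2, b ∉ S := by
        intro b hb
        rw [hW2, Finset.mem_biUnion] at hb
        obtain ⟨j, hj, hbj⟩ := hb
        rw [Finset.mem_Icc] at hj
        exact hBS j (Finset.mem_Icc.2 ⟨by omega, hj.2⟩) b hbj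
      have hins : ∀ b ∈ W2, M₁.rank (insert b X) = M₁.rank X := by
        intro b hb
        rw [hW2, Finset.mem_biUnion] at hb
        obtain ⟨j, hj, hbj⟩ := hb
        rw [Finset.mem_Icc] at hj
        have hjI : j ∈ Finset.Icc 1 (ℓ + 1) := Finset.mem_Icc.2 ⟨by omega, hj.2⟩
        have hbS : b ∉ S := hBS j hjI b hbj
        have hbX : b ∉ X := fun hx => hbS (Finset.sdiff_subset hx)
        have hrins : M₁.rank (insert b S) = n := by
          refine le_antisymm ?_ (hrankS ▸ M₁.rank_mono (Finset.subset_insert b S))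
          have h1 : insert b S ⊆ S ∪ B j := by
            intro x hx
            rcases Finset.mem_insert.1 hx with rfl | hx
            · exact Finset.mem_union_right _ hbj
            · exact Finset.mem_union_left _ hx
          calc M₁.rank (insert b S) ≤ M₁.rank (S ∪ B j) := M₁.rank_mono h1
            _ = M₁.rank S := hspan j (Finset.mem_Icc.2 ⟨by omega, hj.2⟩)
            _ = n := hrankS
        have hnotI : ¬ M₁.Indep (insert b X) := by
          intro hIb
          obtain ⟨Z', hZ'1, hZ'2, hZ'3, hZ'4⟩ := M₁.exists_extend (insert b X) (insert b S) hIb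
            (Finset.insert_subset_insert _ Finset.sdiff_subset)
          rw [hrins] at hZ'4
          have hcbs : (insert b S).card = n + 1 := Finset.card_insert_of_notMem hbS
          have hsd : ((insert b S) \ Z').card = 1 := by
            rw [Finset.card_sdiff_of_subset hZ'2]; omega
          obtain ⟨a₀, ha₀⟩ := Finset.card_eq_one.1 hsd
          have ha₀m : a₀ ∈ insert b S ∧ a₀ ∉ Z' := by
            have h5 : a₀ ∈ (insert b S) \ Z' := ha₀ ▸ Finset.mem_singleton_self a₀
            exact Finset.mem_sdiff.1 h5
          have hbZ' : b ∈ Z' := hZ'1 (Finset.mem_insert_self _ _)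
          have ha₀b : a₀ ≠ b := fun h => ha₀m.2 (h ▸ hbZ')
          have ha₀S : a₀ ∈ S := (Finset.mem_insert.1 ha₀m.1).resolve_left ha₀b
          have hn1 : 1 ≤ n := Finset.card_pos.2 ⟨a₀, ha₀S⟩
          have ha₀A : a₀ ∈ A k := by
            by_contra hna
            exact ha₀m.2 (hZ'1 (Finset.mem_insert_of_mem (Finset.mem_sdiff.2 ⟨ha₀S, hna⟩)))
          have hZ'eq : Z' = insert b (S.erase a₀) := by
            have hsub : Z' ⊆ insert b (S.erase a₀) := by
              intro x hx
              rcases Finset.mem_insert.1 (hZ'2 hx) with rfl | hxS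
              · exact Finset.mem_insert_self _ _
              · refine Finset.mem_insert_of_mem (Finset.mem_erase.2 ⟨?_, hxS⟩)
                rintro rfl; exact ha₀m.2 hx
            refine Finset.eq_of_subset_of_card_le hsub ?_
            rw [Finset.card_insert_of_notMem (fun h => hbS (Finset.mem_of_mem_erase h)),
              Finset.card_erase_of_mem ha₀S, hZ'4]
            omega
          exact hnoedge k hkIcc j hjI (by omega) a₀ ha₀A b hbj (hZ'eq ▸ hZ'3)
        have h1 := M₁.rank_le_card (insert b X)
        have h2 : M₁.rank (insert b X) ≠ (insert b X).card := fun h =>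
          hnotI (M₁.indep_of_card_le_rank h.ge)
        have h3 := M₁.rank_mono (Finset.subset_insert b X)
        have h4 : (insert b X).card = n - w + 1 := by
          rw [Finset.card_insert_of_notMem hbX, hXc]
        omega
      have hrXW : M₁.rank (X ∪ W2) = n - w := by rw [M₁.rank_union_eq_of_forall hins, hrX]
      set Uk : Finset α := (Finset.Icc k ℓ).biUnion A with hUk
      set Z : Finset α := (S \ Uk) ∪ W2 with hZ
      have hUkS : Uk ⊆ S := by
        rw [hUk]
        apply Finset.biUnion_subset.2
        intro i hi
        rw [Finset.mem_Icc] at hi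
        exact hAS i (Finset.mem_Icc.2 ⟨by omega, hi.2⟩)
      have hUkc : Uk.card = (ℓ + 1 - k) * w := by
        rw [hUk, Finset.card_biUnion]
        · have hcon : ∑ i ∈ Finset.Icc k ℓ, (A i).card = ∑ _i ∈ Finset.Icc k ℓ, w :=
            Finset.sum_congr rfl (fun i hi => by
              rw [Finset.mem_Icc] at hi; exact hcA i (Finset.mem_Icc.2 ⟨by omega, hi.2⟩))
          rw [hcon, Finset.sum_const, Nat.card_Icc, smul_eq_mul]
        · intro i hi j hj hij
          rw [Finset.mem_coe, Finset.mem_Icc] at hi hj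
          exact hAA i (Finset.mem_Icc.2 ⟨by omega, hi.2⟩) j (Finset.mem_Icc.2 ⟨by omega, hj.2⟩) hij
      have hW2c : W2.card = (ℓ - k) * w := by
        rw [hW2, Finset.card_biUnion]
        · have hcon : ∑ j ∈ Finset.Icc (k+1+1) (ℓ+1), (B j).card
              = ∑ _j ∈ Finset.Icc (k+1+1) (ℓ+1), w :=
            Finset.sum_congr rfl (fun j hj => by
              rw [Finset.mem_Icc] at hj; exact hcB j (Finset.mem_Icc.2 ⟨by omega, hj.2⟩))
          rw [hcon, Finset.sum_const, Nat.card_Icc, smul_eq_mul]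
          congr 1
          omega
        · intro i hi j hj hij
          rw [Finset.mem_coe, Finset.mem_Icc] at hi hj
          exact hBB i (Finset.mem_Icc.2 ⟨by omega, hi.2⟩) j (Finset.mem_Icc.2 ⟨by omega, hj.2⟩) hij
      have hUkn : Uk.card ≤ n := Finset.card_le_card hUkS
      have hdisj1 : Disjoint (S \ Uk) W2 := by
        rw [Finset.disjoint_right]
        intro b hb hbS'
        exact hW2S b hb (Finset.mem_sdiff.1 hbS').1
      have hmul : (ℓ + 1 - k) * w = (ℓ - k) * w + w := by
        rw [show ℓ + 1 - k = (ℓ - k) + 1 by omega, add_mul, one_mul]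
      have hZc : Z.card = n - w := by
        rw [hZ, Finset.card_union_of_disjoint hdisj1, Finset.card_sdiff_of_subset hUkS, hUkc, hW2c]
        omega
      have hZi : M₁.Indep Z := by
        apply M₁.subset_indep IH
        rw [hZ]
        apply Finset.union_subset_union_left
        apply Finset.sdiff_subset_sdiff Finset.Subset.rfl
        apply Finset.biUnion_subset_biUnion_of_subset_left
        apply Finset.Icc_subset_Icc_left
        omega
      have hZsub2 : Z ⊆ X ∪ W2 := by
        rw [hZ, hX]
        apply Finset.union_subset_union_left
        apply Finset.sdiff_subset_sdiff Finset.Subset.rfl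
        rw [hUk]
        exact Finset.subset_biUnion_of_mem A (Finset.mem_Icc.2 ⟨le_rfl, hkl⟩)
      have hsp := M₁.rank_union_congr (B (k+1)) hZi hZsub2 (by rw [hZc, hrXW])
      have hk1I : k + 1 ∈ Finset.Icc 1 (ℓ + 1) := Finset.mem_Icc.2 ⟨by omega, by omega⟩
      have hBk1S : ∀ b ∈ B (k+1), b ∉ S := fun b hb => hBS (k+1) hk1I b hb
      have hXBi : M₁.Indep (X ∪ B (k+1)) := hI1 k hkIcc
      have hdisj2 : Disjoint X (B (k+1)) := by
        rw [Finset.disjoint_right]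
        intro b hb hbX
        exact hBk1S b hb (Finset.mem_sdiff.1 (hX ▸ hbX)).1
      have hXBc : (X ∪ B (k+1)).card = n := by
        rw [Finset.card_union_of_disjoint hdisj2, hXc, hcB (k+1) hk1I]
        omega
      have hlow : n ≤ M₁.rank ((X ∪ W2) ∪ B (k+1)) := by
        have h6 := M₁.card_le_rank hXBi
          (Finset.union_subset_union_left (Finset.subset_union_left (s₂ := W2)))
        rw [hXBc] at h6
        exact h6
      have hdisj3 : Disjoint Z (B (k+1)) := by
        rw [Finset.disjoint_left]
        intro b hbZ hb
        rcases Finset.mem_union.1 (hZ ▸ hbZ) with h' | h'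
        · exact hBk1S b hb (Finset.mem_sdiff.1 h').1
        · rw [hW2, Finset.mem_biUnion] at h'
          obtain ⟨j, hj, hbj⟩ := h'
          rw [Finset.mem_Icc] at hj
          exact (Finset.disjoint_left.1
            (hBB (k+1) hk1I j (Finset.mem_Icc.2 ⟨by omega, hj.2⟩) (by omega)) hb) hbj
      have hZBc : (Z ∪ B (k+1)).card = n := by
        rw [Finset.card_union_of_disjoint hdisj3, hZc, hcB (k+1) hk1I]
        omega
      have hfin : M₁.Indep (Z ∪ B (k+1)) := by
        apply M₁.indep_of_card_le_rank
        rw [hZBc, ← hsp]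
        exact hlow
      have hgoal_eq : Z ∪ B (k+1) = (S \ Uk) ∪ ((Finset.Icc (k+1) (ℓ+1)).biUnion B) := by
        have hsplit : (Finset.Icc (k+1) (ℓ+1)).biUnion B = B (k+1) ∪ W2 := by
          rw [show Finset.Icc (k+1) (ℓ+1) = insert (k+1) (Finset.Icc (k+1+1) (ℓ+1)) from by
            ext x; simp only [Finset.mem_Icc, Finset.mem_insert]; omega,
            Finset.biUnion_insert, hW2]
        rw [hsplit, hZ]
        ext x
        simp only [Finset.mem_union]
        tauto
      exact hgoal_eq ▸ hfin
  simpa using main ℓ 1 le_rfl (by omega)
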